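/- Let A be a non-unital semisimple Banach algebra with the spectral extension property, and suppose A has the P-property. Then the unitization A_e also has the P-property: every nonzero closed ideal I of A_e contains an element c with r_{pA_e}(c) > 0. -/

import Mathlib

/-- A submultiplicative algebra norm on a (possibly non-unital) complex algebra. -/
structure AlgNorm (A : Type*) [NonUnitalRing A] [Module ℂ A]
    extends RingNorm A where
  smul' : ∀ (c : ℂ) (x : A), toFun (c • x) = ‖c‖ * toFun x

/-- The spectral radius in a non-unital complex algebra, via the quasispectrum. -/
noncomputable def quasiRadius {A : Type*} [NonUnitalRing A] [Module ℂ A]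
    [IsScalarTower ℂ A A] [SMulCommClass ℂ A A] (a : A) : ENNReal :=
  ⨆ k ∈ quasispectrum ℂ a, (‖k‖₊ : ENNReal)

/-- The permanent radius of `a`: the infimum of `|a|` over all algebra norms. -/
noncomputable def permRadius {A : Type*} [NonUnitalRing A] [Module ℂ A]
    (a : A) : ℝ :=
  sInf {r : ℝ | ∃ p : AlgNorm A, r = p.toRingNorm a}

section Aux

variable {A : Type*} [NonUnitalNormedRing A] [NormedSpace ℂ A]
    [IsScalarTower ℂ A A] [SMulCommClass ℂ A A]

/-- Restriction of an algebra norm on the unitization to `A`. -/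
def AlgNorm.restrict (p : AlgNorm (Unitization ℂ A)) : AlgNorm A where
  toFun a := p.toRingNorm (a : Unitization ℂ A)
  map_zero' := by simp
  add_le' x y := by
    show p.toRingNorm ((x + y : A) : Unitization ℂ A) ≤ _
    rw [Unitization.inr_add]; exact p.toRingNorm.add_le' _ _
  neg' x := by
    show p.toRingNorm ((-x : A) : Unitization ℂ A) = _
    rw [Unitization.inr_neg]; exact p.toRingNorm.neg' _
  mul_le' x y := by
    show p.toRingNorm ((x * y : A) : Unitization ℂ A) ≤ _
    rw [Unitization.inr_mul]; exact p.toRingNorm.mul_le' _ _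
  eq_zero_of_map_eq_zero' x h := by
    have := p.toRingNorm.eq_zero_of_map_eq_zero' _ h
    exact Unitization.inr_injective (by simpa using this)
  smul' c x := by
    show p.toRingNorm ((c • x : A) : Unitization ℂ A) = _
    rw [Unitization.inr_smul]; exact p.smul' c _

/-- An explicit algebra norm on the unitization: `‖z‖ = ‖z.fst‖ + ‖z.snd‖`. -/
noncomputable def unitizationAlgNorm : AlgNorm (Unitization ℂ A) where
  toFun z := ‖z.fst‖ + ‖z.snd‖
  map_zero' := by simp
  add_le' x y := by
    simp only [Unitization.fst_add, Unitization.snd_add]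
    have h1 := norm_add_le x.fst y.fst
    have h2 := norm_add_le x.snd y.snd
    linarith
  neg' x := by simp
  mul_le' x y := by
    simp only [Unitization.fst_mul, Unitization.snd_mul]
    have h1 : ‖x.fst * y.fst‖ ≤ ‖x.fst‖ * ‖y.fst‖ := by
      rw [norm_mul]
    have h2 : ‖x.fst • y.snd + y.fst • x.snd + x.snd * y.snd‖ ≤
        ‖x.fst‖ * ‖y.snd‖ + ‖y.fst‖ * ‖x.snd‖ + ‖x.snd‖ * ‖y.snd‖ := by
      refine (norm_add_le _ _).trans ?_
      gcongr
      refine (norm_add_le _ _).trans ?_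
      gcongr <;> exact (norm_smul _ _).le
      · exact norm_mul_le _ _
    have h3 : (0:ℝ) ≤ ‖x.fst‖ := norm_nonneg _
    have h4 : (0:ℝ) ≤ ‖y.fst‖ := norm_nonneg _
    nlinarith [norm_nonneg x.snd, norm_nonneg y.snd]
  eq_zero_of_map_eq_zero' z h := by
    have h' : ‖z.fst‖ + ‖z.snd‖ = 0 := h
    have h1 : ‖z.fst‖ = 0 ∧ ‖z.snd‖ = 0 := by
      constructor <;> nlinarith [norm_nonneg z.fst, norm_nonneg z.snd]
    exact Unitization.ext (norm_eq_zero.mp h1.1) (norm_eq_zero.mp h1.2)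
  smul' c z := by
    simp only [Unitization.fst_smul, Unitization.snd_smul, norm_smul,
      smul_eq_mul, norm_mul, mul_add]

lemma permRadius_nonneg (a : A) : 0 ≤ permRadius a := by
  apply Real.sInf_nonneg
  rintro r ⟨p, rfl⟩
  exact apply_nonneg p.toRingNorm a

lemma permRadius_le_inr (a : A) : permRadius a ≤ permRadius (a : Unitization ℂ A) := by
  refine le_csInf ⟨_, unitizationAlgNorm, rfl⟩ ?_
  rintro r ⟨p, rfl⟩
  apply csInf_le
  · exact ⟨0, by rintro r ⟨q, rfl⟩; exact apply_nonneg q.toRingNorm a⟩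
  · exact ⟨p.restrict, rfl⟩

lemma quasiRadius_zero : quasiRadius (0 : A) = 0 := by
  rw [quasiRadius]
  refine le_antisymm ?_ (zero_le)
  refine iSup₂_le fun k hk => ?_
  have hk0 : k = 0 := by
    by_contra h
    refine hk (isUnit_iff_ne_zero.mpr h) ?_
    rw [smul_zero, neg_zero]
    exact isQuasiregular_iff.mpr ⟨0, by simp, by simp⟩
  simp [hk0]

end Aux

/-- If `A` is a non-unital semisimple Banach algebra with the spectral extension
property and `A` has the P-property, then the unitization `A_e` has the P-property:
every nonzero closed ideal of `A_e` contains an element of strictly positive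
permanent radius. -/
theorem pProperty_unitization
    (A : Type*) [NonUnitalNormedRing A] [NormedSpace ℂ A]
    [IsScalarTower ℂ A A] [SMulCommClass ℂ A A] [CompleteSpace A]
    (hA : ¬ ∃ e : A, ∀ x : A, e * x = x ∧ x * e = x)
    (hss : ∀ a : A, (∀ x : A, quasiRadius (x * a) = 0) → a = 0)
    (hSEP : ∀ p : AlgNorm A, ∀ a : A,
      quasiRadius a ≤ ENNReal.ofReal (p.toRingNorm a))
    (hP : ∀ I : TwoSidedIdeal A, IsClosed (I : Set A) → (∃ b : A, b ∈ I ∧ b ≠ 0) →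
      ∃ a : A, a ∈ I ∧ 0 < permRadius a) :
    ∀ I : TwoSidedIdeal (Unitization ℂ A), IsClosed (I : Set (Unitization ℂ A)) →
      (∃ z : Unitization ℂ A, z ∈ I ∧ z ≠ 0) →
      ∃ c : Unitization ℂ A, c ∈ I ∧ 0 < permRadius c := by
  rintro I hIc ⟨z, hzI, hz0⟩
  -- the restricted ideal J = inr ⁻¹' I
  set J : TwoSidedIdeal A := TwoSidedIdeal.mk' ((fun a => (a : Unitization ℂ A)) ⁻¹' I)
    (by simp [Set.mem_preimage, TwoSidedIdeal.zero_mem])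
    (fun {x y} hx hy => by
      simp only [Set.mem_preimage, Unitization.inr_add] at *
      exact I.add_mem hx hy)
    (fun {x} hx => by
      simp only [Set.mem_preimage, Unitization.inr_neg] at *
      exact I.neg_mem hx)
    (fun {x y} hy => by
      simp only [Set.mem_preimage, Unitization.inr_mul] at *
      exact I.mul_mem_left _ _ hy)
    (fun {x y} hx => by
      simp only [Set.mem_preimage, Unitization.inr_mul] at *
      exact I.mul_mem_right _ _ hx) with hJdef
  have hJmem : ∀ a : A, a ∈ J ↔ (a : Unitization ℂ A) ∈ I := fun a => by
    rw [hJdef, TwoSidedIdeal.mem_mk']; rfl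
  -- J is closed
  have hJc : IsClosed (J : Set A) := by
    have hco : (J : Set A) =
        (fun a : A => (a : Unitization ℂ A)) ⁻¹' (I : Set (Unitization ℂ A)) := by
      rw [hJdef, TwoSidedIdeal.coe_mk']
    rw [hco]
    have h1 : Continuous (fun a : A => Unitization.addEquiv ℂ A (a : Unitization ℂ A)) := by
      have h2 : (fun a : A => Unitization.addEquiv ℂ A (a : Unitization ℂ A)) =
          fun a : A => ((0 : ℂ), a) := rfl
      rw [h2]
      exact continuous_const.prodMk continuous_id
    have hcont : Continuous (fun a : A => (a : Unitization ℂ A)) :=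
      ((Unitization.isUniformEmbedding_addEquiv (𝕜 := ℂ)).toIsUniformInducing.isInducing).continuous_iff.mpr h1
    exact hIc.preimage hcont
  -- J is nonzero
  have hJne : ∃ b : A, b ∈ J ∧ b ≠ 0 := by
    by_contra h
    push_neg at h
    have hJ0 : ∀ b : A, (b : Unitization ℂ A) ∈ I → b = 0 := fun b hb =>
      h b ((hJmem b).mpr hb)
    set s := z.fst with hs
    set a := z.snd with ha
    have key1 : ∀ x : A, s • x + x * a = 0 := by
      intro x
      have hx : ((x : Unitization ℂ A) * z) ∈ I := I.mul_mem_left _ _ hzI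
      have hxval : ((x : Unitization ℂ A) * z) = ((s • x + x * a : A) : Unitization ℂ A) := by
        refine Unitization.ext ?_ ?_ <;>
          simp [Unitization.fst_mul, Unitization.snd_mul, mul_comm, add_comm] <;> rfl
      rw [hxval] at hx
      exact hJ0 _ hx
    have key2 : ∀ x : A, s • x + a * x = 0 := by
      intro x
      have hx : (z * (x : Unitization ℂ A)) ∈ I := I.mul_mem_right _ _ hzI
      have hxval : (z * (x : Unitization ℂ A)) = ((s • x + a * x : A) : Unitization ℂ A) := by
        refine Unitization.ext ?_ ?_ <;>
          simp [Unitization.fst_mul, Unitization.snd_mul, mul_comm, add_comm] <;> rfl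
      rw [hxval] at hx
      exact hJ0 _ hx
    by_cases hs0 : s = 0
    · -- then x * a = 0 for all x, semisimplicity gives a = 0, so z = 0
      have ha0 : a = 0 := by
        apply hss
        intro x
        have := key1 x
        rw [hs0, zero_smul, zero_add] at this
        rw [this, quasiRadius_zero]
      exact hz0 (Unitization.ext hs0 ha0)
    · -- then (-s⁻¹) • a is an identity for A
      refine hA ⟨(-s⁻¹) • a, fun x => ⟨?_, ?_⟩⟩
      · have := key2 x
        have h2 : a * x = -(s • x) := by linear_combination (norm := module) this
        rw [smul_mul_assoc, h2, smul_neg, smul_smul]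
        rw [neg_mul, neg_smul, neg_neg, inv_mul_cancel₀ hs0, one_smul]
      · have := key1 x
        have h2 : x * a = -(s • x) := by linear_combination (norm := module) this
        rw [mul_smul_comm, h2, smul_neg, smul_smul]
        rw [neg_mul, neg_smul, neg_neg, inv_mul_cancel₀ hs0, one_smul]
  -- apply the P-property of A
  obtain ⟨a, haJ, hapos⟩ := hP J hJc hJne
  exact ⟨(a : Unitization ℂ A), (hJmem a).mp haJ,
    lt_of_lt_of_le hapos (permRadius_le_inr a)⟩
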